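/- arXiv:1502.07584 — 2 statements merged into one kernel-verified Lean document; each statement's English description precedes it below -/
import Mathlib

section
/- Let f₁ : U₁ → V₁ and f₂ : U₂ → V₂ be linear maps of finite-dimensional real inner product spaces. Then det⊥(f₁ ⊕ f₂) = det⊥(f₁) · det⊥(f₂), where f₁ ⊕ f₂ : U₁ ⊕ U₂ → V₁ ⊕ V₂ is the direct sum map. -/
/-- `det⊥(f)`: for a linear map `f : V → W` of finite-dimensional real inner product
spaces, `detPerp f = 1` if `f = 0`, and otherwise it is the square root of the determinant
of the endomorphism of the orthogonal complement of `ker (f* ∘ f)` induced by `f* ∘ f`. -/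
noncomputable def detPerp {V W : Type*} [NormedAddCommGroup V] [InnerProductSpace ℝ V]
    [NormedAddCommGroup W] [InnerProductSpace ℝ W]
    [FiniteDimensional ℝ V] [FiniteDimensional ℝ W] (f : V →ₗ[ℝ] W) : ℝ :=
  letI := Classical.propDecidable (f = 0)
  if f = 0 then 1
  else Real.sqrt (LinearMap.det
    ((Submodule.orthogonalProjectionOnto (LinearMap.ker (LinearMap.adjoint f ∘ₗ f))ᗮ).toLinearMap
      ∘ₗ (LinearMap.adjoint f ∘ₗ f)
      ∘ₗ (LinearMap.ker (LinearMap.adjoint f ∘ₗ f))ᗮ.subtype))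



open LinearMap RealInnerProductSpace

section Aux

lemma Matrix.PosSemidef.det_nonneg' {n : Type*} [Fintype n] [DecidableEq n]
    {M : Matrix n n ℝ} (h : M.PosSemidef) : 0 ≤ M.det := by
  rw [h.isHermitian.det_eq_prod_eigenvalues]
  exact Finset.prod_nonneg fun i _ => by exact_mod_cast h.eigenvalues_nonneg i

lemma det_prodMap_aux {M₁ M₂ : Type*} [AddCommGroup M₁] [Module ℝ M₁]
    [AddCommGroup M₂] [Module ℝ M₂] [FiniteDimensional ℝ M₁] [FiniteDimensional ℝ M₂]
    (φ₁ : M₁ →ₗ[ℝ] M₁) (φ₂ : M₂ →ₗ[ℝ] M₂) :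
    LinearMap.det (φ₁.prodMap φ₂) = LinearMap.det φ₁ * LinearMap.det φ₂ := by
  classical
  let b₁ := Module.finBasis ℝ M₁
  let b₂ := Module.finBasis ℝ M₂
  rw [← LinearMap.det_toMatrix (b₁.prod b₂), LinearMap.toMatrix_prodMap b₁ b₂ φ₁ φ₂,
    Matrix.det_fromBlocks_zero₂₁, LinearMap.det_toMatrix, LinearMap.det_toMatrix]

variable {V W : Type*} [NormedAddCommGroup V] [InnerProductSpace ℝ V]
    [NormedAddCommGroup W] [InnerProductSpace ℝ W]
    [FiniteDimensional ℝ V] [FiniteDimensional ℝ W]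

noncomputable def perpMap (f : V →ₗ[ℝ] W) :
    ↥(LinearMap.ker (LinearMap.adjoint f ∘ₗ f))ᗮ →ₗ[ℝ] ↥(LinearMap.ker (LinearMap.adjoint f ∘ₗ f))ᗮ :=
  (Submodule.orthogonalProjectionOnto (LinearMap.ker (LinearMap.adjoint f ∘ₗ f))ᗮ).toLinearMap
    ∘ₗ (LinearMap.adjoint f ∘ₗ f)
    ∘ₗ (LinearMap.ker (LinearMap.adjoint f ∘ₗ f))ᗮ.subtype

lemma apply_mem_orth (f : V →ₗ[ℝ] W) (x : V) :
    (LinearMap.adjoint f ∘ₗ f) x ∈ (LinearMap.ker (LinearMap.adjoint f ∘ₗ f))ᗮ := by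
  rw [Submodule.mem_orthogonal]
  intro u hu
  have h0 : (LinearMap.adjoint f ∘ₗ f) u = 0 := hu
  calc ⟪u, (LinearMap.adjoint f ∘ₗ f) x⟫ = ⟪f u, f x⟫ := by
        simp only [LinearMap.comp_apply]; rw [LinearMap.adjoint_inner_right]
    _ = ⟪(LinearMap.adjoint f ∘ₗ f) u, x⟫ := by
        simp only [LinearMap.comp_apply]; rw [LinearMap.adjoint_inner_left]
    _ = 0 := by rw [h0, inner_zero_left]

lemma perpMap_coe (f : V →ₗ[ℝ] W) (x : ↥(LinearMap.ker (LinearMap.adjoint f ∘ₗ f))ᗮ) :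
    (perpMap f x : V) = (LinearMap.adjoint f ∘ₗ f) x := by
  simpa [perpMap] using Submodule.starProjection_eq_self_iff.2 (apply_mem_orth f x)

lemma detPerp_eq_sqrt (f : V →ₗ[ℝ] W) :
    detPerp f = Real.sqrt (LinearMap.det (perpMap f)) := by
  unfold detPerp
  split_ifs with h
  · subst h
    have hK : (LinearMap.ker (LinearMap.adjoint (0 : V →ₗ[ℝ] W) ∘ₗ (0 : V →ₗ[ℝ] W)))ᗮ = ⊥ := by
      simp
    haveI : Subsingleton ↥(LinearMap.ker (LinearMap.adjoint (0 : V →ₗ[ℝ] W) ∘ₗ (0 : V →ₗ[ℝ] W)))ᗮ := by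
      rw [hK]; infer_instance
    rw [LinearMap.det_eq_one_of_subsingleton, Real.sqrt_one]
  · rfl

lemma det_perpMap_nonneg (f : V →ₗ[ℝ] W) : 0 ≤ LinearMap.det (perpMap f) := by
  classical
  set K := (LinearMap.ker (LinearMap.adjoint f ∘ₗ f))ᗮ
  have hπ : K.orthogonalProjectionOnto.toLinearMap = LinearMap.adjoint K.subtype := by
    rw [LinearMap.eq_adjoint_iff]
    intro x u
    rw [ContinuousLinearMap.coe_coe, Submodule.inner_orthogonalProjectionOnto_eq_of_mem_right]
    rfl
  have hcomp : perpMap f = LinearMap.adjoint (f ∘ₗ K.subtype) ∘ₗ (f ∘ₗ K.subtype) := by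
    rw [LinearMap.adjoint_comp]
    rw [perpMap, hπ]
    ext x
    simp
  let b := stdOrthonormalBasis ℝ ↥K
  let c := stdOrthonormalBasis ℝ W
  rw [← LinearMap.det_toMatrix b.toBasis, hcomp,
    LinearMap.toMatrix_comp b.toBasis c.toBasis, LinearMap.toMatrix_adjoint]
  exact (Matrix.posSemidef_conjTranspose_mul_self _).det_nonneg'

end Aux


set_option maxHeartbeats 2000000 in
/-- For linear maps `f₁ : U₁ → V₁` and `f₂ : U₂ → V₂` of finite-dimensional real inner
product spaces, the direct sum map `f₁ ⊕ f₂ : U₁ ⊕ U₂ → V₁ ⊕ V₂` (orthogonal direct sums,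
i.e. `L²`-products) satisfies `det⊥(f₁ ⊕ f₂) = det⊥(f₁) · det⊥(f₂)`. -/
theorem detPerp_directSum {U₁ U₂ V₁ V₂ : Type*}
    [NormedAddCommGroup U₁] [InnerProductSpace ℝ U₁] [FiniteDimensional ℝ U₁]
    [NormedAddCommGroup U₂] [InnerProductSpace ℝ U₂] [FiniteDimensional ℝ U₂]
    [NormedAddCommGroup V₁] [InnerProductSpace ℝ V₁] [FiniteDimensional ℝ V₁]
    [NormedAddCommGroup V₂] [InnerProductSpace ℝ V₂] [FiniteDimensional ℝ V₂]
    (f₁ : U₁ →ₗ[ℝ] V₁) (f₂ : U₂ →ₗ[ℝ] V₂)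
    (F : WithLp 2 (U₁ × U₂) →ₗ[ℝ] WithLp 2 (V₁ × V₂))
    (hF : ∀ u : WithLp 2 (U₁ × U₂),
      (WithLp.linearEquiv 2 ℝ (V₁ × V₂)) (F u) =
        (f₁ ((WithLp.linearEquiv 2 ℝ (U₁ × U₂)) u).1,
         f₂ ((WithLp.linearEquiv 2 ℝ (U₁ × U₂)) u).2)) :
    detPerp F = detPerp f₁ * detPerp f₂ := by
  classical
  have hFu : ∀ u : WithLp 2 (U₁ × U₂),
      F u = WithLp.toLp 2 (f₁ u.ofLp.1, f₂ u.ofLp.2) := fun u => congrArg (WithLp.toLp 2) (hF u)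
  set g₁ : U₁ →ₗ[ℝ] U₁ := LinearMap.adjoint f₁ ∘ₗ f₁ with hg₁
  set g₂ : U₂ →ₗ[ℝ] U₂ := LinearMap.adjoint f₂ ∘ₗ f₂ with hg₂
  -- the adjoint of F acts componentwise
  have hadj : ∀ v : WithLp 2 (V₁ × V₂),
      LinearMap.adjoint F v
        = WithLp.toLp 2 (LinearMap.adjoint f₁ v.ofLp.1, LinearMap.adjoint f₂ v.ofLp.2) := by
    have : ((WithLp.linearEquiv 2 ℝ (U₁ × U₂)).symm.toLinearMap
        ∘ₗ ((LinearMap.adjoint f₁).prodMap (LinearMap.adjoint f₂))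
        ∘ₗ (WithLp.linearEquiv 2 ℝ (V₁ × V₂)).toLinearMap) = LinearMap.adjoint F := by
      rw [LinearMap.eq_adjoint_iff]
      intro x y
      rw [WithLp.prod_inner_apply (𝕜 := ℝ), WithLp.prod_inner_apply (𝕜 := ℝ)]
      have h1 : (F y).ofLp.1 = f₁ y.ofLp.1 := congrArg Prod.fst (congrArg WithLp.ofLp (hFu y))
      have h2 : (F y).ofLp.2 = f₂ y.ofLp.2 := congrArg Prod.snd (congrArg WithLp.ofLp (hFu y))
      show inner ℝ (LinearMap.adjoint f₁ x.ofLp.1) y.ofLp.1 + inner ℝ (LinearMap.adjoint f₂ x.ofLp.2) y.ofLp.2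
          = inner ℝ x.ofLp.1 (F y).ofLp.1 + inner ℝ x.ofLp.2 (F y).ofLp.2
      rw [h1, h2, LinearMap.adjoint_inner_left, LinearMap.adjoint_inner_left]
    exact fun v => (congrFun (congrArg DFunLike.coe this) v).symm
  have hG : ∀ u : WithLp 2 (U₁ × U₂),
      (LinearMap.adjoint F ∘ₗ F) u = WithLp.toLp 2 (g₁ u.ofLp.1, g₂ u.ofLp.2) := by
    intro u
    have := hadj (F u)
    rw [LinearMap.comp_apply, this, congrArg Prod.fst (congrArg WithLp.ofLp (hFu u)),
      congrArg Prod.snd (congrArg WithLp.ofLp (hFu u))]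
    rfl
  -- kernel membership componentwise
  have hker : ∀ u : WithLp 2 (U₁ × U₂),
      u ∈ LinearMap.ker (LinearMap.adjoint F ∘ₗ F) ↔ u.ofLp.1 ∈ LinearMap.ker g₁ ∧ u.ofLp.2 ∈ LinearMap.ker g₂ := by
    intro u
    simp only [LinearMap.mem_ker]
    rw [hG u]
    exact ⟨fun h => ⟨congrArg Prod.fst (congrArg WithLp.ofLp h), congrArg Prod.snd (congrArg WithLp.ofLp h)⟩,
      fun h => WithLp.ofLp_injective 2 (Prod.ext h.1 h.2)⟩
  -- orthogonal complement membership componentwise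
  have horth : ∀ u : WithLp 2 (U₁ × U₂),
      u ∈ (LinearMap.ker (LinearMap.adjoint F ∘ₗ F))ᗮ
        ↔ u.ofLp.1 ∈ (LinearMap.ker g₁)ᗮ ∧ u.ofLp.2 ∈ (LinearMap.ker g₂)ᗮ := by
    intro u
    simp only [Submodule.mem_orthogonal]
    constructor
    · intro h
      constructor
      · intro w hw
        have := h (WithLp.toLp 2 (w, 0))
          ((hker _).2 ⟨hw, by simp [LinearMap.mem_ker]⟩)
        rw [WithLp.prod_inner_apply (𝕜 := ℝ)] at this
        simpa using this
      · intro w hw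
        have := h (WithLp.toLp 2 (0, w))
          ((hker _).2 ⟨by simp [LinearMap.mem_ker], hw⟩)
        rw [WithLp.prod_inner_apply (𝕜 := ℝ)] at this
        simpa using this
    · intro ⟨h1, h2⟩ v hv
      rw [WithLp.prod_inner_apply (𝕜 := ℝ), h1 v.ofLp.1 ((hker v).1 hv).1, h2 v.ofLp.2 ((hker v).1 hv).2,
        add_zero]
  -- the equivalence between the product of complements and the complement in the product
  let e : (↥(LinearMap.ker g₁)ᗮ × ↥(LinearMap.ker g₂)ᗮ) ≃ₗ[ℝ]
      ↥(LinearMap.ker (LinearMap.adjoint F ∘ₗ F))ᗮ :=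
    { toFun := fun p => ⟨WithLp.toLp 2 (p.1.1, p.2.1),
        (horth _).2 ⟨p.1.2, p.2.2⟩⟩
      map_add' := fun p q => rfl
      map_smul' := fun c p => rfl
      invFun := fun z => (⟨(z : WithLp 2 (U₁ × U₂)).ofLp.1, ((horth _).1 z.2).1⟩,
        ⟨(z : WithLp 2 (U₁ × U₂)).ofLp.2, ((horth _).1 z.2).2⟩)
      left_inv := fun p => rfl
      right_inv := fun z => rfl }
  have hcomm : perpMap F ∘ₗ (e : _ →ₗ[ℝ] _)
      = (e : _ →ₗ[ℝ] _) ∘ₗ ((perpMap f₁).prodMap (perpMap f₂)) := by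
    apply LinearMap.ext
    intro p
    apply Subtype.ext
    have hv : ((e p : ↥(LinearMap.ker (LinearMap.adjoint F ∘ₗ F))ᗮ) : WithLp 2 (U₁ × U₂))
        = WithLp.toLp 2 (p.1.1, p.2.1) := rfl
    show (perpMap F (e p) : WithLp 2 (U₁ × U₂)) = _
    rw [perpMap_coe, hv, hG]
    show WithLp.toLp 2 (g₁ p.1.1, g₂ p.2.1)
      = WithLp.toLp 2 ((perpMap f₁ p.1 : U₁), (perpMap f₂ p.2 : U₂))
    rw [perpMap_coe, perpMap_coe]
  have hdet : LinearMap.det (perpMap F)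
      = LinearMap.det (perpMap f₁) * LinearMap.det (perpMap f₂) := by
    have heq : perpMap F = (e : _ →ₗ[ℝ] _) ∘ₗ ((perpMap f₁).prodMap (perpMap f₂))
        ∘ₗ (e.symm : _ →ₗ[ℝ] _) := by
      apply LinearMap.ext
      intro z
      have h := LinearMap.congr_fun hcomm (e.symm z)
      simp only [LinearMap.comp_apply, LinearEquiv.coe_coe,
        LinearEquiv.apply_symm_apply] at h ⊢
      exact h
    rw [heq, LinearMap.det_conj _ e, det_prodMap_aux]
  rw [detPerp_eq_sqrt, detPerp_eq_sqrt, detPerp_eq_sqrt, hdet,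
    Real.sqrt_mul (det_perpMap_nonneg f₁)]
end

section
/- Let f_* : C_* → D_* be a chain map of finite Hilbert chain complexes such that C_* and D_* are contractible (chain homotopy equivalent to the zero complex) and f_n is bijective for each n ∈ ℤ. Then ρ(D_*) − ρ(C_*) = Σ_{n ∈ ℤ} (-1)^n · ln(det⊥(f_n)). -/
open LinearMap Submodule

section Aux
variable {V W U : Type*}
  [NormedAddCommGroup V] [InnerProductSpace ℝ V] [FiniteDimensional ℝ V]
  [NormedAddCommGroup W] [InnerProductSpace ℝ W] [FiniteDimensional ℝ W]
  [NormedAddCommGroup U] [InnerProductSpace ℝ U] [FiniteDimensional ℝ U]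

/-- The "orthogonal determinant" `sqrt (det (g* ∘ g))`. -/
noncomputable def ddet (g : V →ₗ[ℝ] W) : ℝ :=
  Real.sqrt (LinearMap.det (LinearMap.adjoint g ∘ₗ g))

lemma ddet_subsingleton [Subsingleton V] (g : V →ₗ[ℝ] W) : ddet g = 1 := by
  unfold ddet
  rw [LinearMap.det_eq_one_of_subsingleton, Real.sqrt_one]

lemma aux_adjoint_subtype (U' : Submodule ℝ V) :
    LinearMap.adjoint U'.subtype = (orthogonalProjection U').toLinearMap := by
  apply LinearMap.ext
  intro v
  apply ext_inner_left ℝ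
  intro u
  rw [LinearMap.adjoint_inner_right]
  simp only [Submodule.coe_subtype, ContinuousLinearMap.coe_coe]
  exact (inner_orthogonalProjection_eq_of_mem_left (K := U') u v).symm

lemma aux_adjoint_subtype_comp (U' : Submodule ℝ V) :
    LinearMap.adjoint U'.subtype ∘ₗ U'.subtype = LinearMap.id := by
  apply LinearMap.ext
  intro u
  apply ext_inner_left ℝ
  intro x
  simp only [LinearMap.comp_apply, LinearMap.id_apply]
  rw [LinearMap.adjoint_inner_right]
  simp [Submodule.coe_inner]

lemma ddet_subtype_comp (U' : Submodule ℝ W) (u : V →ₗ[ℝ] U') :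
    ddet (U'.subtype ∘ₗ u) = ddet u := by
  unfold ddet
  have h : LinearMap.adjoint (U'.subtype ∘ₗ u) ∘ₗ (U'.subtype ∘ₗ u)
      = LinearMap.adjoint u ∘ₗ u := by
    rw [LinearMap.adjoint_comp]
    have : (LinearMap.adjoint u ∘ₗ LinearMap.adjoint U'.subtype) ∘ₗ U'.subtype ∘ₗ u
        = LinearMap.adjoint u ∘ₗ (LinearMap.adjoint U'.subtype ∘ₗ U'.subtype) ∘ₗ u := by
      simp only [LinearMap.comp_assoc]
    rw [this, aux_adjoint_subtype_comp, LinearMap.id_comp]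
  rw [h]

lemma ddet_codRestrict (U' : Submodule ℝ W) (g : V →ₗ[ℝ] W) (h : ∀ x, g x ∈ U') :
    ddet (g.codRestrict U' h) = ddet g := by
  conv_rhs => rw [← LinearMap.subtype_comp_codRestrict U' h (f := g)]
  rw [ddet_subtype_comp]

lemma aux_det_adjoint_comp {ι : Type*} [Fintype ι] [DecidableEq ι]
    (b₁ : OrthonormalBasis ι ℝ V) (b₂ : OrthonormalBasis ι ℝ W) (g : V →ₗ[ℝ] W) :
    LinearMap.det (LinearMap.adjoint g ∘ₗ g)
      = (Matrix.det (LinearMap.toMatrix b₁.toBasis b₂.toBasis g)) ^ 2 := by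
  rw [← LinearMap.det_toMatrix b₁.toBasis,
    LinearMap.toMatrix_comp b₁.toBasis b₂.toBasis b₁.toBasis,
    LinearMap.toMatrix_adjoint]
  rw [Matrix.det_mul, Matrix.det_conjTranspose]
  simp [sq, mul_comm]

lemma ddet_eq_abs_det {ι : Type*} [Fintype ι] [DecidableEq ι]
    (b₁ : OrthonormalBasis ι ℝ V) (b₂ : OrthonormalBasis ι ℝ W) (g : V →ₗ[ℝ] W) :
    ddet g = |Matrix.det (LinearMap.toMatrix b₁.toBasis b₂.toBasis g)| := by
  rw [ddet, aux_det_adjoint_comp b₁ b₂, Real.sqrt_sq_eq_abs]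

lemma aux_det_adjoint_comp_nonneg_of_bij (h : U →ₗ[ℝ] V) (hh : Function.Bijective h) :
    0 ≤ LinearMap.det (LinearMap.adjoint h ∘ₗ h) := by
  have hr : Module.finrank ℝ U = Module.finrank ℝ V :=
    (LinearEquiv.ofBijective h hh).finrank_eq
  let b₁ := stdOrthonormalBasis ℝ U
  let b₂ := (stdOrthonormalBasis ℝ V).reindex (finCongr hr.symm)
  rw [aux_det_adjoint_comp b₁ b₂ h]
  positivity

lemma ddet_comp_bij (g : V →ₗ[ℝ] W) (h : U →ₗ[ℝ] V) (hh : Function.Bijective h) :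
    ddet (g ∘ₗ h) = ddet g * ddet h := by
  unfold ddet
  set e := LinearEquiv.ofBijective h hh with he
  have hcomp : LinearMap.adjoint (g ∘ₗ h) ∘ₗ (g ∘ₗ h)
      = (LinearMap.adjoint h ∘ₗ h) ∘ₗ ((e.symm : V →ₗ[ℝ] U) ∘ₗ (LinearMap.adjoint g ∘ₗ g) ∘ₗ (e : U →ₗ[ℝ] V)) := by
    apply LinearMap.ext
    intro x
    simp only [LinearMap.comp_apply, LinearMap.adjoint_comp, LinearEquiv.coe_coe]
    have h1 : h (e.symm ((LinearMap.adjoint g ∘ₗ g) (e x))) = (LinearMap.adjoint g) (g (h x)) := by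
      have : ∀ y, h (e.symm y) = y := fun y => e.apply_symm_apply y
      rw [this]
      simp only [LinearMap.comp_apply, he]
      rfl
    simp only [LinearMap.comp_apply] at h1 ⊢
    rw [h1]
  rw [hcomp, LinearMap.det_comp]
  have hconj : LinearMap.det ((e.symm : V →ₗ[ℝ] U) ∘ₗ (LinearMap.adjoint g ∘ₗ g) ∘ₗ (e : U →ₗ[ℝ] V))
      = LinearMap.det (LinearMap.adjoint g ∘ₗ g) := by
    have := LinearMap.det_conj (LinearMap.adjoint g ∘ₗ g) e.symm
    rw [← this]
    congr 1
  rw [hconj, Real.sqrt_mul (aux_det_adjoint_comp_nonneg_of_bij h hh), mul_comm]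

lemma ddet_subtype_eq_one (U' : Submodule ℝ V) : ddet U'.subtype = 1 := by
  unfold ddet
  rw [aux_adjoint_subtype_comp, LinearMap.det_id, Real.sqrt_one]

lemma ddet_pos_of_bijective (g : V →ₗ[ℝ] W) (hg : Function.Bijective g) :
    0 < ddet g := by
  have hr : Module.finrank ℝ V = Module.finrank ℝ W :=
    (LinearEquiv.ofBijective g hg).finrank_eq
  let b₁ := stdOrthonormalBasis ℝ V
  let b₂ := (stdOrthonormalBasis ℝ W).reindex (finCongr hr.symm)
  rw [ddet_eq_abs_det b₁ b₂]
  set e := LinearEquiv.ofBijective g hg with he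
  have h1 : LinearMap.toMatrix b₂.toBasis b₁.toBasis (e.symm : W →ₗ[ℝ] V)
      * LinearMap.toMatrix b₁.toBasis b₂.toBasis g = 1 := by
    rw [← LinearMap.toMatrix_comp b₁.toBasis b₂.toBasis b₁.toBasis]
    have h2 : (e.symm : W →ₗ[ℝ] V) ∘ₗ g = LinearMap.id := by
      apply LinearMap.ext
      intro x
      simp only [LinearMap.comp_apply, LinearEquiv.coe_coe, LinearMap.id_apply, he]
      exact e.symm_apply_apply x
    rw [h2, LinearMap.toMatrix_id]
  have h3 : Matrix.det (LinearMap.toMatrix b₁.toBasis b₂.toBasis g) ≠ 0 := by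
    intro h0
    have := congrArg Matrix.det h1
    rw [Matrix.det_mul, h0, mul_zero, Matrix.det_one] at this
    norm_num at this
  exact abs_pos.mpr h3

lemma ddet_pos_of_injective (g : V →ₗ[ℝ] W) (hg : Function.Injective g) :
    0 < ddet g := by
  have h := LinearMap.subtype_comp_codRestrict (p := LinearMap.range g) g
    (fun x => LinearMap.mem_range_self g x)
  rw [← h, ddet_subtype_comp]
  apply ddet_pos_of_bijective
  constructor
  · intro x y hxy
    apply hg
    have := congrArg (Subtype.val) hxy
    exact this
  · rintro ⟨w, x, rfl⟩
    exact ⟨x, rfl⟩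

lemma ddet_nonneg' (g : V →ₗ[ℝ] W) : 0 ≤ ddet g := Real.sqrt_nonneg _

lemma aux_ker_adjoint_comp_self (f : V →ₗ[ℝ] W) :
    LinearMap.ker (LinearMap.adjoint f ∘ₗ f) = LinearMap.ker f := by
  ext x
  simp only [LinearMap.mem_ker, LinearMap.comp_apply]
  constructor
  · intro h
    have h2 : (inner ℝ (f x) (f x) : ℝ) = 0 := by
      rw [← LinearMap.adjoint_inner_right f x (f x)]
      · rw [h, inner_zero_right]
    rwa [inner_self_eq_zero] at h2
  · intro h
    rw [h, map_zero]

lemma detPerp_aux (f : V →ₗ[ℝ] W) (K : Submodule ℝ V) (hK : K = LinearMap.ker f) :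
    Real.sqrt (LinearMap.det
      ((orthogonalProjection Kᗮ).toLinearMap ∘ₗ (LinearMap.adjoint f ∘ₗ f) ∘ₗ Kᗮ.subtype))
    = ddet (f ∘ₗ (LinearMap.ker f)ᗮ.subtype) := by
  subst hK
  rw [ddet]
  congr 1
  rw [LinearMap.adjoint_comp, aux_adjoint_subtype]
  simp only [LinearMap.comp_assoc]

lemma detPerp_eq_ddet (f : V →ₗ[ℝ] W) :
    detPerp f = ddet (f ∘ₗ (LinearMap.ker f)ᗮ.subtype) := by
  by_cases hf : f = 0
  · have h1 : (LinearMap.ker f)ᗮ = ⊥ := by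
      rw [hf, LinearMap.ker_zero, Submodule.top_orthogonal_eq_bot]
    rw [detPerp, if_pos hf, h1]
    haveI : Subsingleton (↥(⊥ : Submodule ℝ V)) := by
      rw [Submodule.subsingleton_iff_eq_bot]
    exact (ddet_subsingleton _).symm
  · rw [detPerp, if_neg hf]
    exact detPerp_aux f _ (aux_ker_adjoint_comp_self f)

lemma detPerp_pos (f : V →ₗ[ℝ] W) : 0 < detPerp f := by
  rw [detPerp_eq_ddet]
  apply ddet_pos_of_injective
  rw [← LinearMap.ker_eq_bot, Submodule.eq_bot_iff]
  rintro ⟨x, hx⟩ hker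
  have hxk : x ∈ LinearMap.ker f := by
    simpa [LinearMap.mem_ker] using hker
  have hx0 : x = 0 := (Submodule.mem_bot ℝ).mp
    ((Submodule.orthogonal_disjoint (LinearMap.ker f)).le_bot ⟨hxk, hx⟩)
  exact Subtype.ext hx0

lemma detPerp_zero : detPerp (0 : V →ₗ[ℝ] W) = 1 := by
  rw [detPerp, if_pos rfl]

lemma detPerp_of_bijective (f : V →ₗ[ℝ] W) (hf : Function.Bijective f) :
    detPerp f = ddet f := by
  rw [detPerp_eq_ddet]
  have h1 : LinearMap.ker f = ⊥ := LinearMap.ker_eq_bot.mpr hf.injective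
  rw [h1, Submodule.bot_orthogonal_eq_top]
  have hbij : Function.Bijective ((⊤ : Submodule ℝ V).subtype) :=
    ⟨Subtype.val_injective, fun x => ⟨⟨x, trivial⟩, rfl⟩⟩
  rw [ddet_comp_bij f _ hbij, ddet_subtype_eq_one, mul_one]

section Decomp
variable {ι₁ ι₂ : Type*} [Fintype ι₁] [Fintype ι₂] [DecidableEq ι₁] [DecidableEq ι₂]

noncomputable def orthoSumBasis (K : Submodule ℝ V) (b₁ : OrthonormalBasis ι₁ ℝ K)
    (b₂ : OrthonormalBasis ι₂ ℝ Kᗮ) : Module.Basis (ι₁ ⊕ ι₂) ℝ V :=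
  (b₁.toBasis.prod b₂.toBasis).map
    (Submodule.prodEquivOfIsCompl _ _ K.isCompl_orthogonal)

lemma orthoSumBasis_apply_inl (K : Submodule ℝ V) (b₁ : OrthonormalBasis ι₁ ℝ K)
    (b₂ : OrthonormalBasis ι₂ ℝ Kᗮ) (i : ι₁) :
    orthoSumBasis K b₁ b₂ (Sum.inl i) = (b₁ i : V) := by
  simp [orthoSumBasis, Module.Basis.map_apply, Module.Basis.prod_apply,
    Submodule.coe_prodEquivOfIsCompl']

lemma orthoSumBasis_apply_inr (K : Submodule ℝ V) (b₁ : OrthonormalBasis ι₁ ℝ K)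
    (b₂ : OrthonormalBasis ι₂ ℝ Kᗮ) (i : ι₂) :
    orthoSumBasis K b₁ b₂ (Sum.inr i) = (b₂ i : V) := by
  simp [orthoSumBasis, Module.Basis.map_apply, Module.Basis.prod_apply,
    Submodule.coe_prodEquivOfIsCompl']

lemma orthoSumBasis_orthonormal (K : Submodule ℝ V) (b₁ : OrthonormalBasis ι₁ ℝ K)
    (b₂ : OrthonormalBasis ι₂ ℝ Kᗮ) :
    Orthonormal ℝ (orthoSumBasis K b₁ b₂) := by
  rw [orthonormal_iff_ite]
  have h₁ := orthonormal_iff_ite.mp b₁.orthonormal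
  have h₂ := orthonormal_iff_ite.mp b₂.orthonormal
  rintro (i | i) (j | j)
  · rw [orthoSumBasis_apply_inl, orthoSumBasis_apply_inl, ← Submodule.coe_inner, h₁]
    simp
  · rw [orthoSumBasis_apply_inl, orthoSumBasis_apply_inr]
    simp only [reduceCtorEq, if_false]
    exact (b₂ j).2 _ (b₁ i).2
  · rw [orthoSumBasis_apply_inr, orthoSumBasis_apply_inl]
    rw [real_inner_comm]
    simp only [reduceCtorEq, if_false]
    exact (b₂ i).2 _ (b₁ j).2
  · rw [orthoSumBasis_apply_inr, orthoSumBasis_apply_inr, ← Submodule.coe_inner, h₂]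
    simp

lemma toMatrix_onb_entry {ι ι' : Type*} [Fintype ι] [DecidableEq ι] [Fintype ι']
    [DecidableEq ι'] (b : OrthonormalBasis ι ℝ V) (b' : OrthonormalBasis ι' ℝ W)
    (g : V →ₗ[ℝ] W) (i : ι') (j : ι) :
    LinearMap.toMatrix b.toBasis b'.toBasis g i j = inner ℝ (b' i) (g (b j)) := by
  rw [LinearMap.toMatrix_apply, OrthonormalBasis.coe_toBasis_repr_apply,
    OrthonormalBasis.repr_apply_apply, OrthonormalBasis.coe_toBasis]

lemma ddet_decomp (g : V →ₗ[ℝ] W) (hg : Function.Bijective g) (K : Submodule ℝ V)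
    (K' : Submodule ℝ W) (hK' : Submodule.map g K = K') :
    ddet g = ddet (g ∘ₗ K.subtype)
      * ddet ((orthogonalProjection K'ᗮ).toLinearMap ∘ₗ (g ∘ₗ Kᗮ.subtype)) := by
  subst hK'
  have hKK' : ∀ x : ↥K, (g ∘ₗ K.subtype) x ∈ Submodule.map g K :=
    fun x => ⟨x, x.2, rfl⟩
  set A := (g ∘ₗ K.subtype).codRestrict (Submodule.map g K) hKK' with hA
  set Bm := (orthogonalProjection (Submodule.map g K)).toLinearMap ∘ₗ (g ∘ₗ Kᗮ.subtype) with hBm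
  set Cm := (orthogonalProjection (Submodule.map g K)ᗮ).toLinearMap ∘ₗ (g ∘ₗ Kᗮ.subtype) with hCm
  have r1 : Module.finrank ℝ ↥K = Module.finrank ℝ ↥(Submodule.map g K) :=
    (Submodule.equivMapOfInjective g hg.injective K).finrank_eq
  have r2 : Module.finrank ℝ ↥Kᗮ = Module.finrank ℝ ↥((Submodule.map g K)ᗮ) := by
    have hVW : Module.finrank ℝ V = Module.finrank ℝ W :=
      (LinearEquiv.ofBijective g hg).finrank_eq
    have e1 := Submodule.finrank_add_finrank_orthogonal (K := K)
    have e2 := Submodule.finrank_add_finrank_orthogonal (K := Submodule.map g K)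
    omega
  set bK := stdOrthonormalBasis ℝ ↥K with hbK
  set bKo := stdOrthonormalBasis ℝ ↥Kᗮ with hbKo
  set bK' := (stdOrthonormalBasis ℝ ↥(Submodule.map g K)).reindex (finCongr r1.symm) with hbK'
  set bK'o := (stdOrthonormalBasis ℝ ↥((Submodule.map g K)ᗮ)).reindex (finCongr r2.symm) with hbK'o
  set onV := (orthoSumBasis K bK bKo).toOrthonormalBasis
    (orthoSumBasis_orthonormal K bK bKo) with honV
  set onW := (orthoSumBasis (Submodule.map g K) bK' bK'o).toOrthonormalBasis
    (orthoSumBasis_orthonormal _ bK' bK'o) with honW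
  have hM : LinearMap.toMatrix onV.toBasis onW.toBasis g
      = Matrix.fromBlocks (LinearMap.toMatrix bK.toBasis bK'.toBasis A)
          (LinearMap.toMatrix bKo.toBasis bK'.toBasis Bm) 0
          (LinearMap.toMatrix bKo.toBasis bK'o.toBasis Cm) := by
    ext i j
    rcases i with i | i <;> rcases j with j | j
    · rw [toMatrix_onb_entry]
      simp only [honV, honW, Module.Basis.coe_toOrthonormalBasis, orthoSumBasis_apply_inl,
        Matrix.fromBlocks_apply₁₁]
      rw [toMatrix_onb_entry, Submodule.coe_inner]
      congr 1
    · rw [toMatrix_onb_entry]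
      simp only [honV, honW, Module.Basis.coe_toOrthonormalBasis, orthoSumBasis_apply_inl,
        orthoSumBasis_apply_inr, Matrix.fromBlocks_apply₁₂]
      rw [toMatrix_onb_entry, hBm]
      simp only [LinearMap.comp_apply, ContinuousLinearMap.coe_coe]
      rw [inner_orthogonalProjection_eq_of_mem_left]
      rfl
    · rw [toMatrix_onb_entry]
      simp only [honV, honW, Module.Basis.coe_toOrthonormalBasis, orthoSumBasis_apply_inl,
        orthoSumBasis_apply_inr, Matrix.fromBlocks_apply₂₁]
      rw [Matrix.zero_apply, real_inner_comm]
      exact (bK'o i).2 _ ⟨bK j, (bK j).2, rfl⟩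
    · rw [toMatrix_onb_entry]
      simp only [honV, honW, Module.Basis.coe_toOrthonormalBasis, orthoSumBasis_apply_inr,
        Matrix.fromBlocks_apply₂₂]
      rw [toMatrix_onb_entry, hCm]
      simp only [LinearMap.comp_apply, ContinuousLinearMap.coe_coe]
      rw [inner_orthogonalProjection_eq_of_mem_left]
      rfl
  rw [ddet_eq_abs_det onV onW g, hM, Matrix.det_fromBlocks_zero₂₁, abs_mul,
    ← ddet_eq_abs_det bK bK' A, ← ddet_eq_abs_det bKo bK'o Cm, hA, ddet_codRestrict]

end Decomp

lemma aux_comp_proj_eq (g : W →ₗ[ℝ] U) :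
    g ∘ₗ ((LinearMap.ker g)ᗮ.subtype ∘ₗ (orthogonalProjection (LinearMap.ker g)ᗮ).toLinearMap)
      = g := by
  apply LinearMap.ext
  intro x
  simp only [LinearMap.comp_apply, Submodule.coe_subtype, ContinuousLinearMap.coe_coe]
  have hsplit : ((orthogonalProjection (LinearMap.ker g) x : W))
      + ((orthogonalProjection (LinearMap.ker g)ᗮ x : W)) = x :=
    Submodule.starProjection_add_starProjection_orthogonal (K := LinearMap.ker g) x
  conv_rhs => rw [← hsplit]
  rw [map_add]
  have h0 : g ((orthogonalProjection (LinearMap.ker g) x : W)) = 0 :=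
    (orthogonalProjection (LinearMap.ker g) x).2
  rw [h0, zero_add]

lemma aux_range_comp_ortho (g : V →ₗ[ℝ] W) :
    LinearMap.range (g ∘ₗ (LinearMap.ker g)ᗮ.subtype) = LinearMap.range g := by
  apply le_antisymm
  · rintro _ ⟨y, rfl⟩
    exact ⟨y, rfl⟩
  · rintro _ ⟨v, rfl⟩
    refine ⟨orthogonalProjection (LinearMap.ker g)ᗮ v, ?_⟩
    have := LinearMap.congr_fun (aux_comp_proj_eq g) v
    simpa using this

lemma star_identity {V₁ V₀ W₁ W₀ : Type*}
    [NormedAddCommGroup V₁] [InnerProductSpace ℝ V₁] [FiniteDimensional ℝ V₁]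
    [NormedAddCommGroup V₀] [InnerProductSpace ℝ V₀] [FiniteDimensional ℝ V₀]
    [NormedAddCommGroup W₁] [InnerProductSpace ℝ W₁] [FiniteDimensional ℝ W₁]
    [NormedAddCommGroup W₀] [InnerProductSpace ℝ W₀] [FiniteDimensional ℝ W₀]
    (cc : V₁ →ₗ[ℝ] V₀) (dd' : W₁ →ₗ[ℝ] W₀) (f₁ : V₁ →ₗ[ℝ] W₁) (f₀ : V₀ →ₗ[ℝ] W₀)
    (hsq : dd' ∘ₗ f₁ = f₀ ∘ₗ cc) (hf₁ : Function.Bijective f₁) (hf₀ : Function.Bijective f₀)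
    (K₀ : Submodule ℝ V₀) (hK₀ : LinearMap.range cc = K₀) :
    detPerp dd' * ddet ((orthogonalProjection (LinearMap.ker dd')ᗮ).toLinearMap
        ∘ₗ (f₁ ∘ₗ (LinearMap.ker cc)ᗮ.subtype))
      = ddet (f₀ ∘ₗ K₀.subtype) * detPerp cc := by
  have hsq' : ∀ x, dd' (f₁ x) = f₀ (cc x) := fun x =>
    LinearMap.congr_fun hsq x
  have hmapker : Submodule.map f₁ (LinearMap.ker cc) = LinearMap.ker dd' := by
    ext w
    simp only [Submodule.mem_map, LinearMap.mem_ker]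
    constructor
    · rintro ⟨x, hx, rfl⟩
      rw [hsq' x, hx, map_zero]
    · intro hw
      obtain ⟨x, rfl⟩ := hf₁.surjective w
      refine ⟨x, ?_, rfl⟩
      apply hf₀.injective
      rw [← hsq' x, hw, map_zero]
  set Pf := (orthogonalProjection (LinearMap.ker dd')ᗮ).toLinearMap
      ∘ₗ (f₁ ∘ₗ (LinearMap.ker cc)ᗮ.subtype) with hPf
  have hPfinj : Function.Injective Pf := by
    rw [← LinearMap.ker_eq_bot, Submodule.eq_bot_iff]
    rintro ⟨x, hx⟩ hker
    have h0 : orthogonalProjection (LinearMap.ker dd')ᗮ (f₁ x) = 0 := by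
      simpa [hPf, LinearMap.mem_ker] using hker
    have h1 : f₁ x ∈ LinearMap.ker dd' := by
      have := Submodule.orthogonalProjectionOnto_eq_zero_iff.mp h0
      rwa [Submodule.orthogonal_orthogonal] at this
    rw [← hmapker] at h1
    obtain ⟨z, hz, hzx⟩ := Submodule.mem_map.mp h1
    have hz' : x ∈ LinearMap.ker cc := by
      rw [← hf₁.injective hzx]; exact hz
    have hx0 : x = 0 := (Submodule.mem_bot ℝ).mp
      ((Submodule.orthogonal_disjoint (LinearMap.ker cc)).le_bot
        (Submodule.mem_inf.mpr ⟨hz', hx⟩))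
    exact Subtype.ext hx0
  have hrk : Module.finrank ℝ ↥(LinearMap.ker cc)ᗮ
      = Module.finrank ℝ ↥(LinearMap.ker dd')ᗮ := by
    have h1 : Module.finrank ℝ ↥(LinearMap.ker cc)
        = Module.finrank ℝ ↥(LinearMap.ker dd') := by
      rw [← hmapker]
      exact (Submodule.equivMapOfInjective f₁ hf₁.injective _).finrank_eq
    have h2 : Module.finrank ℝ V₁ = Module.finrank ℝ W₁ :=
      (LinearEquiv.ofBijective f₁ hf₁).finrank_eq
    have e1 := Submodule.finrank_add_finrank_orthogonal (K := LinearMap.ker cc)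
    have e2 := Submodule.finrank_add_finrank_orthogonal (K := LinearMap.ker dd')
    omega
  have hPfbij : Function.Bijective Pf :=
    ⟨hPfinj, (LinearMap.injective_iff_surjective_of_finrank_eq_finrank hrk).mp hPfinj⟩
  have hmem : ∀ x : ↥(LinearMap.ker cc)ᗮ, (cc ∘ₗ (LinearMap.ker cc)ᗮ.subtype) x ∈ K₀ := by
    intro x
    rw [← hK₀]
    exact ⟨x, rfl⟩
  set ct := (cc ∘ₗ (LinearMap.ker cc)ᗮ.subtype).codRestrict K₀ hmem with hct
  have hctbij : Function.Bijective ct := by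
    constructor
    · rw [← LinearMap.ker_eq_bot, Submodule.eq_bot_iff]
      rintro ⟨x, hx⟩ hker
      have h0 : cc x = 0 := by
        have := congrArg Subtype.val (LinearMap.mem_ker.mp hker)
        simpa [hct] using this
      have hx0 : x = 0 := (Submodule.mem_bot ℝ).mp
        ((Submodule.orthogonal_disjoint (LinearMap.ker cc)).le_bot ⟨h0, hx⟩)
      exact Subtype.ext hx0
    · rintro ⟨y, hy⟩
      have hy' : y ∈ LinearMap.range (cc ∘ₗ (LinearMap.ker cc)ᗮ.subtype) := by
        rw [aux_range_comp_ortho, hK₀]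
        exact hy
      obtain ⟨x, hxy⟩ := hy'
      exact ⟨x, Subtype.ext hxy⟩
  have hE1 : (dd' ∘ₗ (LinearMap.ker dd')ᗮ.subtype) ∘ₗ Pf
      = (f₀ ∘ₗ K₀.subtype) ∘ₗ ct := by
    have step1 : (dd' ∘ₗ (LinearMap.ker dd')ᗮ.subtype) ∘ₗ Pf
        = dd' ∘ₗ (f₁ ∘ₗ (LinearMap.ker cc)ᗮ.subtype) := by
      rw [hPf]
      have : (dd' ∘ₗ (LinearMap.ker dd')ᗮ.subtype)
            ∘ₗ ((orthogonalProjection (LinearMap.ker dd')ᗮ).toLinearMap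
              ∘ₗ (f₁ ∘ₗ (LinearMap.ker cc)ᗮ.subtype))
          = (dd' ∘ₗ ((LinearMap.ker dd')ᗮ.subtype
              ∘ₗ (orthogonalProjection (LinearMap.ker dd')ᗮ).toLinearMap))
            ∘ₗ (f₁ ∘ₗ (LinearMap.ker cc)ᗮ.subtype) := by
        simp only [LinearMap.comp_assoc]
      rw [this, aux_comp_proj_eq]
    rw [step1]
    have step2 : dd' ∘ₗ (f₁ ∘ₗ (LinearMap.ker cc)ᗮ.subtype)
        = f₀ ∘ₗ (cc ∘ₗ (LinearMap.ker cc)ᗮ.subtype) := by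
      rw [← LinearMap.comp_assoc, hsq, LinearMap.comp_assoc]
    rw [step2, ← LinearMap.subtype_comp_codRestrict (p := K₀) _ hmem]
    simp only [LinearMap.comp_assoc]
    rfl
  calc detPerp dd' * ddet Pf
      = ddet (dd' ∘ₗ (LinearMap.ker dd')ᗮ.subtype) * ddet Pf := by
        rw [detPerp_eq_ddet]
    _ = ddet ((dd' ∘ₗ (LinearMap.ker dd')ᗮ.subtype) ∘ₗ Pf) := by
        rw [ddet_comp_bij _ _ hPfbij]
    _ = ddet ((f₀ ∘ₗ K₀.subtype) ∘ₗ ct) := by rw [hE1]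
    _ = ddet (f₀ ∘ₗ K₀.subtype) * ddet ct := by
        rw [ddet_comp_bij _ _ hctbij]
    _ = ddet (f₀ ∘ₗ K₀.subtype) * detPerp cc := by
        rw [hct, ddet_codRestrict, ← detPerp_eq_ddet]

lemma aux_map_ker {V₁ V₀ W₁ W₀ : Type*}
    [NormedAddCommGroup V₁] [InnerProductSpace ℝ V₁] [FiniteDimensional ℝ V₁]
    [NormedAddCommGroup V₀] [InnerProductSpace ℝ V₀] [FiniteDimensional ℝ V₀]
    [NormedAddCommGroup W₁] [InnerProductSpace ℝ W₁] [FiniteDimensional ℝ W₁]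
    [NormedAddCommGroup W₀] [InnerProductSpace ℝ W₀] [FiniteDimensional ℝ W₀]
    (cc : V₁ →ₗ[ℝ] V₀) (dd' : W₁ →ₗ[ℝ] W₀) (f₁ : V₁ →ₗ[ℝ] W₁) (f₀ : V₀ →ₗ[ℝ] W₀)
    (hsq : dd' ∘ₗ f₁ = f₀ ∘ₗ cc) (hf₁ : Function.Bijective f₁)
    (hf₀ : Function.Injective f₀) :
    Submodule.map f₁ (LinearMap.ker cc) = LinearMap.ker dd' := by
  have hsq' : ∀ x, dd' (f₁ x) = f₀ (cc x) := fun x => LinearMap.congr_fun hsq x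
  ext w
  simp only [Submodule.mem_map, LinearMap.mem_ker]
  constructor
  · rintro ⟨x, hx, rfl⟩
    rw [hsq' x, hx, map_zero]
  · intro hw
    obtain ⟨x, rfl⟩ := hf₁.surjective w
    refine ⟨x, ?_, rfl⟩
    apply hf₀
    rw [← hsq' x, hw, map_zero]

end Aux


/-- Let `f_* : C_* → D_*` be a chain map of finite Hilbert chain complexes (differentials
`c m n`, `d m n`, vanishing unless `m = n + 1`), both contractible (a chain contraction
`s` with `id = c ∘ s + s ∘ c` exhibits chain homotopy equivalence with the zero complex),
and suppose `f n` is bijective for each `n`.  Then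
`ρ(D_*) − ρ(C_*) = Σ_n (-1)^n · ln(det⊥(f_n))`, where
`ρ(C_*) = -Σ_n (-1)^n ln(det⊥(c_n))`. -/
theorem torsion_of_iso_of_contractible {C D : ℤ → Type*}
    [∀ n, NormedAddCommGroup (C n)] [∀ n, InnerProductSpace ℝ (C n)]
    [∀ n, FiniteDimensional ℝ (C n)]
    [∀ n, NormedAddCommGroup (D n)] [∀ n, InnerProductSpace ℝ (D n)]
    [∀ n, FiniteDimensional ℝ (D n)]
    (c : ∀ m n : ℤ, C m →ₗ[ℝ] C n)
    (hcshape : ∀ m n : ℤ, m ≠ n + 1 → c m n = 0)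
    (hcc : ∀ n : ℤ, c (n + 1) n ∘ₗ c (n + 2) (n + 1) = 0)
    (hcfin : {n : ℤ | ∃ x : C n, x ≠ 0}.Finite)
    (d : ∀ m n : ℤ, D m →ₗ[ℝ] D n)
    (hdshape : ∀ m n : ℤ, m ≠ n + 1 → d m n = 0)
    (hdd : ∀ n : ℤ, d (n + 1) n ∘ₗ d (n + 2) (n + 1) = 0)
    (hdfin : {n : ℤ | ∃ x : D n, x ≠ 0}.Finite)
    -- `C_*` is contractible
    (sC : ∀ m n : ℤ, C m →ₗ[ℝ] C n)
    (hsCshape : ∀ m n : ℤ, n ≠ m + 1 → sC m n = 0)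
    (hsC : ∀ n : ℤ, (LinearMap.id : C n →ₗ[ℝ] C n)
      = c (n + 1) n ∘ₗ sC n (n + 1) + sC (n - 1) n ∘ₗ c n (n - 1))
    -- `D_*` is contractible
    (sD : ∀ m n : ℤ, D m →ₗ[ℝ] D n)
    (hsDshape : ∀ m n : ℤ, n ≠ m + 1 → sD m n = 0)
    (hsD : ∀ n : ℤ, (LinearMap.id : D n →ₗ[ℝ] D n)
      = d (n + 1) n ∘ₗ sD n (n + 1) + sD (n - 1) n ∘ₗ d n (n - 1))
    -- `f` is a chain map which is bijective in every degree
    (f : ∀ n : ℤ, C n →ₗ[ℝ] D n)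
    (hf : ∀ n : ℤ, d (n + 1) n ∘ₗ f (n + 1) = f n ∘ₗ c (n + 1) n)
    (hfbij : ∀ n : ℤ, Function.Bijective (f n)) :
    (- ∑ᶠ n : ℤ, ((-1 : ℝ) ^ n) * Real.log (detPerp (d n (n - 1))))
      - (- ∑ᶠ n : ℤ, ((-1 : ℝ) ^ n) * Real.log (detPerp (c n (n - 1))))
      = ∑ᶠ n : ℤ, ((-1 : ℝ) ^ n) * Real.log (detPerp (f n)) := by
  classical
  have hsq : ∀ n : ℤ, d n (n-1) ∘ₗ f n = f (n-1) ∘ₗ c n (n-1) := by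
    intro n
    have h := hf (n-1)
    rw [show n-1+1 = n by ring] at h
    exact h
  have hexact : ∀ n : ℤ, LinearMap.range (c n (n-1)) = LinearMap.ker (c (n-1) (n-1-1)) := by
    intro n
    apply le_antisymm
    · rintro _ ⟨x, rfl⟩
      have h := hcc (n-1-1)
      rw [show n-1-1+1 = n-1 by ring, show n-1-1+2 = n by ring] at h
      rw [LinearMap.mem_ker]
      exact LinearMap.congr_fun h x
    · intro x hx
      have h := hsC (n-1)
      rw [show n-1+1 = n by ring] at h
      have h2 := LinearMap.congr_fun h x
      simp only [LinearMap.id_apply, LinearMap.add_apply, LinearMap.comp_apply] at h2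
      rw [LinearMap.mem_ker.mp hx, map_zero, add_zero] at h2
      exact ⟨_, h2.symm⟩
  set a : ℤ → ℝ := fun m => ddet (f m ∘ₗ (LinearMap.ker (c m (m-1))).subtype) with ha
  set b : ℤ → ℝ := fun n => ddet ((orthogonalProjection (LinearMap.ker (d n (n-1)))ᗮ).toLinearMap
       ∘ₗ (f n ∘ₗ (LinearMap.ker (c n (n-1)))ᗮ.subtype)) with hb
  have hstar : ∀ n : ℤ, detPerp (d n (n-1)) * b n = a (n-1) * detPerp (c n (n-1)) := by
    intro n
    simp only [ha, hb]
    exact star_identity (c n (n-1)) (d n (n-1)) (f n) (f (n-1)) (hsq n) (hfbij n)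
      (hfbij (n-1)) (LinearMap.ker (c (n-1) (n-1-1))) (hexact n)
  have hfd : ∀ n : ℤ, detPerp (f n) = a n * b n := by
    intro n
    simp only [ha, hb]
    rw [detPerp_of_bijective (f n) (hfbij n)]
    exact ddet_decomp (f n) (hfbij n) (LinearMap.ker (c n (n-1))) (LinearMap.ker (d n (n-1)))
      (aux_map_ker (c n (n-1)) (d n (n-1)) (f n) (f (n-1)) (hsq n) (hfbij n)
        (hfbij (n-1)).injective)
  have hap : ∀ n : ℤ, 0 < a n := by
    intro n
    simp only [ha]
    apply ddet_pos_of_injective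
    rw [LinearMap.coe_comp]
    exact (hfbij n).injective.comp Subtype.val_injective
  have hbp : ∀ n : ℤ, 0 < b n := by
    intro n
    have h1 := detPerp_pos (f n)
    rw [hfd n] at h1
    have hbnn : 0 ≤ b n := by simp only [hb]; exact ddet_nonneg' _
    have hbne : b n ≠ 0 := by
      intro h0
      rw [h0, mul_zero] at h1
      exact lt_irrefl 0 h1
    exact lt_of_le_of_ne hbnn (Ne.symm hbne)
  set tC : ℤ → ℝ := fun n => ((-1 : ℝ) ^ n) * Real.log (detPerp (c n (n - 1))) with htC
  set tD : ℤ → ℝ := fun n => ((-1 : ℝ) ^ n) * Real.log (detPerp (d n (n - 1))) with htD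
  set tF : ℤ → ℝ := fun n => ((-1 : ℝ) ^ n) * Real.log (detPerp (f n)) with htF
  set tA : ℤ → ℝ := fun m => ((-1 : ℝ) ^ m) * Real.log (a m) with htA
  set tB : ℤ → ℝ := fun n => ((-1 : ℝ) ^ n) * Real.log (b n) with htB
  have hCsub : ∀ n : ℤ, n ∉ {k : ℤ | ∃ x : C k, x ≠ 0} → Subsingleton (C n) := by
    intro n hn
    rw [Set.mem_setOf_eq] at hn
    push_neg at hn
    exact subsingleton_of_forall_eq 0 hn
  have hDsub : ∀ n : ℤ, n ∉ {k : ℤ | ∃ x : D k, x ≠ 0} → Subsingleton (D n) := by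
    intro n hn
    rw [Set.mem_setOf_eq] at hn
    push_neg at hn
    exact subsingleton_of_forall_eq 0 hn
  have hzeroC : ∀ n : ℤ, Subsingleton (C n) → c n (n-1) = 0 := by
    intro n hs
    apply LinearMap.ext
    intro x
    rw [Subsingleton.elim x 0, map_zero, LinearMap.zero_apply]
  have hzeroD : ∀ n : ℤ, Subsingleton (D n) → d n (n-1) = 0 := by
    intro n hs
    apply LinearMap.ext
    intro x
    rw [Subsingleton.elim x 0, map_zero, LinearMap.zero_apply]
  have hzeroF : ∀ n : ℤ, Subsingleton (C n) → f n = 0 := by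
    intro n hs
    apply LinearMap.ext
    intro x
    rw [Subsingleton.elim x 0, map_zero, LinearMap.zero_apply]
  have hfinC : (Function.support tC).Finite := by
    apply hcfin.subset
    intro n hn
    by_contra hmem
    have hs := hCsub n hmem
    have hc0 : c n (n-1) = 0 := hzeroC n hs
    apply hn
    simp only [htC, hc0, detPerp_zero, Real.log_one, mul_zero]
  have hfinD : (Function.support tD).Finite := by
    apply hdfin.subset
    intro n hn
    by_contra hmem
    have hs := hDsub n hmem
    have hd0 : d n (n-1) = 0 := hzeroD n hs
    apply hn
    simp only [htD, hd0, detPerp_zero, Real.log_one, mul_zero]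
  have hsubmod : ∀ {V : Type _} [NormedAddCommGroup V] [InnerProductSpace ℝ V]
      (U : Submodule ℝ V), Subsingleton V → Subsingleton ↥U := by
    intro V _ _ U hs
    exact ⟨fun x y => Subtype.ext (Subsingleton.elim _ _)⟩
  have hfinA : (Function.support tA).Finite := by
    apply hcfin.subset
    intro n hn
    by_contra hmem
    have hs := hCsub n hmem
    have := hsubmod (LinearMap.ker (c n (n-1))) hs
    apply hn
    simp only [htA, ha, ddet_subsingleton, Real.log_one, mul_zero]
  have hfinB : (Function.support tB).Finite := by
    apply hcfin.subset
    intro n hn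
    by_contra hmem
    have hs := hCsub n hmem
    have := hsubmod ((LinearMap.ker (c n (n-1)))ᗮ) hs
    apply hn
    simp only [htB, hb, ddet_subsingleton, Real.log_one, mul_zero]
  have hfinF : (Function.support tF).Finite := by
    apply hcfin.subset
    intro n hn
    by_contra hmem
    have hs := hCsub n hmem
    have hf0 : f n = 0 := hzeroF n hs
    apply hn
    simp only [htF, hf0, detPerp_zero, Real.log_one, mul_zero]
  have hfinA' : (Function.support fun n : ℤ => tA (n-1)).Finite := by
    apply Set.Finite.subset (hfinA.image (fun m => m + 1))
    intro n hn
    refine ⟨n - 1, hn, by ring⟩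
  have main : (∑ᶠ n : ℤ, tC n) - (∑ᶠ n : ℤ, tD n) = ∑ᶠ n : ℤ, tF n := by
    have h1 : (∑ᶠ n : ℤ, tC n) - (∑ᶠ n : ℤ, tD n) = ∑ᶠ n : ℤ, (tC n - tD n) :=
      (finsum_sub_distrib hfinC hfinD).symm
    have h2 : ∀ n : ℤ, tC n - tD n = tB n + tA (n-1) := by
      intro n
      have hkey : Real.log (detPerp (d n (n-1))) + Real.log (b n)
          = Real.log (a (n-1)) + Real.log (detPerp (c n (n-1))) := by
        rw [← Real.log_mul (ne_of_gt (detPerp_pos _)) (ne_of_gt (hbp n)),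
            ← Real.log_mul (ne_of_gt (hap (n-1))) (ne_of_gt (detPerp_pos _)), hstar n]
      have hz : ((-1:ℝ)) ^ (n-1) = -((-1:ℝ)) ^ n := by
        rw [zpow_sub_one₀ (by norm_num : (-1:ℝ) ≠ 0)]
        norm_num
      simp only [htC, htD, htB, htA]
      rw [hz]
      linear_combination (-((-1:ℝ) ^ n)) * hkey
    have h3 : ∑ᶠ n : ℤ, (tC n - tD n) = (∑ᶠ n : ℤ, tB n) + (∑ᶠ n : ℤ, tA (n-1)) := by
      rw [finsum_congr h2]
      exact finsum_add_distrib hfinB hfinA'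
    have h4 : (∑ᶠ n : ℤ, tA (n-1)) = ∑ᶠ m : ℤ, tA m := by
      have h := finsum_comp_equiv (Equiv.subRight (1:ℤ)) (f := tA)
      simpa [Equiv.subRight] using h
    have h5 : (∑ᶠ n : ℤ, tB n) + (∑ᶠ n : ℤ, tA n) = ∑ᶠ n : ℤ, (tB n + tA n) :=
      (finsum_add_distrib hfinB hfinA).symm
    have h6 : ∀ n : ℤ, tB n + tA n = tF n := by
      intro n
      simp only [htB, htA, htF]
      rw [hfd n, Real.log_mul (ne_of_gt (hap n)) (ne_of_gt (hbp n))]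
      ring
    rw [h1, h3, h4, h5, finsum_congr h6]
  linarith [main]
end
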